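/- Let U : ℝ → ℝ satisfy U'' + cU' + U(1-U) = 0, and suppose there exist C > 0, μ > 0 with |U'(z)| ≤ C e^{-μ|z|} for all z. Fix constants N > 0, d₀ > 0, m₁ > 0, m₂ ≥ 2N(2/(m₁ μ) + 1), and T > 0, and suppose d : [0,T] × ℝ^N → ℝ satisfies |d| ≤ 2d₀ and |∂_t d + c| ≤ N|d|. Then for all sufficiently small ε > 0 and all (t,x) ∈ [0,T] × ℝ^N with d(t,x) < -(m₂/(2N)) ε|ln ε| m₁ e^{m₂ t}, writing θ := (d(t,x) + ε|ln ε| m₁ e^{m₂ t})/ε, one has U'(θ)·(∂_t d(t,x) + c + m₂ ε|ln ε| m₁ e^{m₂ t}) ≤ 3CN d₀ · ε^{m₁ μ (m₂/(2N) - 1)} ≤ 3CN d₀ · ε². -/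

import Mathlib

set_option maxHeartbeats 800000 in
theorem far_field_E1_estimate (Nd : ℕ)
    (U : ℝ → ℝ) (c : ℝ)
    (hTW : ∀ z : ℝ, deriv (deriv U) z + c * deriv U z + U z * (1 - U z) = 0)
    (C μ : ℝ) (hC : 0 < C) (hμ : 0 < μ)
    (hU' : ∀ z : ℝ, |deriv U z| ≤ C * Real.exp (-μ * |z|))
    (N d₀ m₁ m₂ T : ℝ) (hN : 0 < N) (hd₀ : 0 < d₀) (hm₁ : 0 < m₁)
    (hm₂ : 2 * N * (2 / (m₁ * μ) + 1) ≤ m₂) (hT : 0 < T)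
    (d : ℝ → EuclideanSpace ℝ (Fin Nd) → ℝ)
    (hd_bdd : ∀ t ∈ Set.Icc (0:ℝ) T, ∀ x, |d t x| ≤ 2 * d₀)
    (hd_vel : ∀ t ∈ Set.Icc (0:ℝ) T, ∀ x,
      |deriv (fun τ => d τ x) t + c| ≤ N * |d t x|) :
    ∃ ε₀ : ℝ, 0 < ε₀ ∧ ∀ ε : ℝ, 0 < ε → ε < ε₀ → ε < 1 →
      ∀ t ∈ Set.Icc (0:ℝ) T, ∀ x : EuclideanSpace ℝ (Fin Nd),
        d t x < -(m₂ / (2 * N)) * (ε * |Real.log ε| * m₁ * Real.exp (m₂ * t)) →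
        deriv U ((d t x + ε * |Real.log ε| * m₁ * Real.exp (m₂ * t)) / ε) *
            (deriv (fun τ => d τ x) t + c + m₂ * (ε * |Real.log ε| * m₁ * Real.exp (m₂ * t)))
          ≤ 3 * C * N * d₀ * ε ^ (m₁ * μ * (m₂ / (2 * N) - 1)) ∧
        3 * C * N * d₀ * ε ^ (m₁ * μ * (m₂ / (2 * N) - 1)) ≤ 3 * C * N * d₀ * ε ^ (2:ℝ) := by
  have hm₂pos : 0 < m₂ := lt_of_lt_of_le (by positivity) hm₂
  set K := m₂ * m₁ * Real.exp (m₂ * T) with hK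
  have hKpos : 0 < K := by positivity
  refine ⟨(N * d₀ / (2 * K)) ^ 2, by positivity, ?_⟩
  intro ε hε hεε₀ hε1 t ht x hdx
  obtain ⟨ht0, htT⟩ := ht
  have hlog : Real.log ε < 0 := Real.log_neg hε hε1
  set L := |Real.log ε| with hLdef
  have hLval : L = -Real.log ε := abs_of_neg hlog
  have hLpos : 0 < L := by rw [hLval]; linarith
  -- ε * L ≤ 2 * √ε
  have hsq : Real.sqrt ε * Real.sqrt ε = ε := Real.mul_self_sqrt hε.le
  have hsqpos : 0 < Real.sqrt ε := Real.sqrt_pos.mpr hε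
  have hεL : ε * L ≤ 2 * Real.sqrt ε := by
    have h1 : Real.log (Real.sqrt ε⁻¹) ≤ Real.sqrt ε⁻¹ :=
      le_trans (Real.log_le_sub_one_of_pos (by positivity)) (by linarith)
    have h2 : Real.log (Real.sqrt ε⁻¹) = -Real.log ε / 2 := by
      rw [Real.log_sqrt (by positivity), Real.log_inv]
    have h3 : Real.sqrt ε⁻¹ = 1 / Real.sqrt ε := by
      rw [Real.sqrt_inv]; ring
    have h4 : L ≤ 2 / Real.sqrt ε := by
      rw [hLval]
      have := h1
      rw [h2, h3] at this
      rw [div_le_div_iff₀ (by norm_num) hsqpos] at this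
      rw [le_div_iff₀ hsqpos]; linarith
    calc ε * L ≤ ε * (2 / Real.sqrt ε) := by
          exact mul_le_mul_of_nonneg_left h4 hε.le
      _ = 2 * Real.sqrt ε := by
          field_simp
          nlinarith [hsq]
  have hsqlt : Real.sqrt ε < N * d₀ / (2 * K) := by
    have := Real.sqrt_lt_sqrt hε.le hεε₀
    rwa [Real.sqrt_sq (by positivity)] at this
  have hKεL : K * (ε * L) ≤ N * d₀ := by
    calc K * (ε * L) ≤ K * (2 * Real.sqrt ε) :=
          mul_le_mul_of_nonneg_left hεL hKpos.le
      _ ≤ K * (2 * (N * d₀ / (2 * K))) := by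
          nlinarith
      _ = N * d₀ := by field_simp
  set A := ε * L * m₁ * Real.exp (m₂ * t) with hA
  have hApos : 0 < A := by positivity
  have hexpT : Real.exp (m₂ * t) ≤ Real.exp (m₂ * T) :=
    Real.exp_le_exp.mpr (by nlinarith)
  have hm₂A : m₂ * A ≤ N * d₀ := by
    have : m₂ * A ≤ K * (ε * L) := by
      have hmono := mul_le_mul_of_nonneg_left hexpT
        (show (0:ℝ) ≤ m₂ * m₁ * (ε * L) by positivity)
      calc m₂ * A = (m₂ * m₁ * (ε * L)) * Real.exp (m₂ * t) := by rw [hA]; ring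
        _ ≤ (m₂ * m₁ * (ε * L)) * Real.exp (m₂ * T) := hmono
        _ = K * (ε * L) := by rw [hK]; ring
    linarith
  -- factor bound
  have hfac : |deriv (fun τ => d τ x) t + c + m₂ * A| ≤ 3 * (N * d₀) := by
    have h1 := hd_vel t ⟨ht0, htT⟩ x
    have h2 := hd_bdd t ⟨ht0, htT⟩ x
    have h3 : |deriv (fun τ => d τ x) t + c| ≤ 2 * (N * d₀) := by
      calc |deriv (fun τ => d τ x) t + c| ≤ N * |d t x| := h1
        _ ≤ N * (2 * d₀) := mul_le_mul_of_nonneg_left h2 hN.le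
        _ = 2 * (N * d₀) := by ring
    calc |deriv (fun τ => d τ x) t + c + m₂ * A|
        ≤ |deriv (fun τ => d τ x) t + c| + |m₂ * A| := abs_add_le _ _
      _ ≤ 2 * (N * d₀) + m₂ * A := by
          rw [abs_of_pos (mul_pos hm₂pos hApos)]; linarith
      _ ≤ 3 * (N * d₀) := by linarith
  -- θ bound
  set r := m₂ / (2 * N) with hr
  have hrge : 2 / (m₁ * μ) + 1 ≤ r := by
    rw [hr, le_div_iff₀ (by positivity)]
    linarith [hm₂]
  have hr1 : 0 < r - 1 := by
    have : 0 < 2 / (m₁ * μ) := by positivity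
    linarith
  set θ := (d t x + A) / ε with hθ
  have hθle : θ ≤ -((r - 1) * m₁ * L) := by
    have hdA : d t x + A ≤ -(r - 1) * A := by
      have : d t x < -r * A := by
        rw [hA]
        calc d t x < -(m₂ / (2*N)) * (ε * |Real.log ε| * m₁ * Real.exp (m₂ * t)) := hdx
          _ = -r * (ε * L * m₁ * Real.exp (m₂ * t)) := by rw [hr, hLdef]
      linarith
    have h1 : θ ≤ -(r - 1) * A / ε := by
      rw [hθ]
      gcongr
    have hA' : A = ε * (L * m₁ * Real.exp (m₂ * t)) := by rw [hA]; ring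
    have h2 : -(r - 1) * A / ε = -((r - 1) * (L * m₁ * Real.exp (m₂ * t))) := by
      rw [hA', mul_div_assoc, mul_div_cancel_left₀ _ hε.ne']
      ring
    have h3 : (r - 1) * m₁ * L ≤ (r - 1) * (L * m₁ * Real.exp (m₂ * t)) := by
      have hexp1 : 1 ≤ Real.exp (m₂ * t) := Real.one_le_exp (by positivity)
      have hnn : (0:ℝ) ≤ (r - 1) * m₁ * L :=
        mul_nonneg (mul_nonneg hr1.le hm₁.le) hLpos.le
      calc (r - 1) * m₁ * L ≤ (r - 1) * m₁ * L * Real.exp (m₂ * t) :=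
            le_mul_of_one_le_right hnn hexp1
        _ = (r - 1) * (L * m₁ * Real.exp (m₂ * t)) := by ring
    linarith [h1.trans_eq h2]
  have hθabs : (r - 1) * m₁ * L ≤ |θ| := by
    have hnn : (0:ℝ) ≤ (r - 1) * m₁ * L :=
      mul_nonneg (mul_nonneg hr1.le hm₁.le) hLpos.le
    have hθneg : θ ≤ 0 := le_trans hθle (neg_nonpos.mpr hnn)
    rw [abs_of_nonpos hθneg]; linarith
  -- exponential bound
  set p := m₁ * μ * (r - 1) with hp
  have hppos : 0 < p := by positivity
  have hexpθ : Real.exp (-μ * |θ|) ≤ ε ^ p := by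
    rw [Real.rpow_def_of_pos hε]
    apply Real.exp_le_exp.mpr
    have : Real.log ε * p = -(μ * ((r - 1) * m₁ * L)) := by
      rw [hLval, hp]; ring
    rw [this]
    nlinarith [hθabs, hμ.le]
  have hU'θ : |deriv U θ| ≤ C * ε ^ p := by
    calc |deriv U θ| ≤ C * Real.exp (-μ * |θ|) := hU' θ
      _ ≤ C * ε ^ p := mul_le_mul_of_nonneg_left hexpθ hC.le
  constructor
  · calc deriv U θ * (deriv (fun τ => d τ x) t + c + m₂ * A)
        ≤ |deriv U θ * (deriv (fun τ => d τ x) t + c + m₂ * A)| := le_abs_self _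
      _ = |deriv U θ| * |deriv (fun τ => d τ x) t + c + m₂ * A| := abs_mul _ _
      _ ≤ (C * ε ^ p) * (3 * (N * d₀)) := by
          apply mul_le_mul hU'θ hfac (abs_nonneg _) (by positivity)
      _ = 3 * C * N * d₀ * ε ^ (m₁ * μ * (m₂ / (2 * N) - 1)) := by
          rw [hp, hr]; ring
  · have h2p : (2:ℝ) ≤ p := by
      have h' : 2 / (m₁ * μ) ≤ r - 1 := by linarith
      have h := mul_le_mul_of_nonneg_left h' (by positivity : (0:ℝ) ≤ m₁ * μ)
      have hmμ : m₁ * μ ≠ 0 := by positivity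
      rw [mul_div_cancel₀ 2 hmμ] at h
      rw [hp]; linarith
    have hmono := Real.rpow_le_rpow_of_exponent_ge hε hε1.le h2p
    exact mul_le_mul_of_nonneg_left hmono (by positivity)
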